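/- Consider a birth and death chain on ℕ with probabilities α_n to go n → n+1 and β_n = 1 - α_n to go n → n-1 (α_0 = 1), and set L_n = Π_{k=1}^n α_k/β_k. The chain is recurrent if and only if Σ_{n=1}^∞ 1/L_n = ∞. -/

import Mathlib

open Finset

/-- Probability of the path `w 0, w 1, …, w t` under the transition kernel `P`. -/
def pathProb (P : ℕ → ℕ → ℝ) (t : ℕ) (w : Fin (t + 1) → Fin (t + 1)) : ℝ :=
  ∏ i : Fin t, P (w i.castSucc : ℕ) (w i.succ : ℕ)

/-- Probability that the walk started at `0` first returns to `0` at time `t`. -/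
def firstReturnProb (P : ℕ → ℕ → ℝ) (t : ℕ) : ℝ :=
  ∑ w : Fin (t + 1) → Fin (t + 1),
    if (w 0 : ℕ) = 0 ∧ (w (Fin.last t) : ℕ) = 0 ∧
        (∀ i : Fin (t + 1), i ≠ 0 → i ≠ Fin.last t → (w i : ℕ) ≠ 0) then
      pathProb P t w
    else 0

/-- The walk is recurrent if it returns to the starting vertex with probability one. -/
def IsRecurrent (P : ℕ → ℕ → ℝ) : Prop :=
  ∑' t : ℕ, firstReturnProb P (t + 1) = 1

/-- Transition probabilities of the birth and death chain on `ℕ`: from `n ≥ 1` go to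
`n+1` with probability `α n` and to `n-1` with probability `1 - α n`; from `0` go
to `1` with probability `1`. -/
noncomputable def bdTrans (a : ℕ → ℝ) : ℕ → ℕ → ℝ := fun n m =>
  if n = 0 then (if m = 1 then 1 else 0)
  else if m = n + 1 then a n
  else if m = n - 1 then 1 - a n
  else 0

noncomputable def pathSum (P : ℕ → ℕ → ℝ) (N t x : ℕ) : ℝ :=
  ∑ v : Fin (t+1) → Fin N,
    if ((v (Fin.last t) : ℕ) = 0 ∧ ∀ j : Fin t, (v j.castSucc : ℕ) ≠ 0) then
      P x (v 0) * ∏ i : Fin t, P (v i.castSucc : ℕ) (v i.succ : ℕ)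
    else 0

lemma sum_pi_succ {N n : ℕ} (g : (Fin (n+1) → Fin N) → ℝ) :
    ∑ w : Fin (n+1) → Fin N, g w = ∑ y : Fin N, ∑ v : Fin n → Fin N, g (Fin.cons y v) := by
  rw [← (Fin.consEquiv (fun _ => Fin N)).sum_comp g, Fintype.sum_prod_type]
  rfl

lemma cons_prod {N n : ℕ} (P : ℕ → ℕ → ℝ) (y : Fin N) (u : Fin (n+1) → Fin N) :
    (∏ i : Fin (n+1), P ((Fin.cons y u : Fin (n+2) → Fin N) i.castSucc : ℕ)
        ((Fin.cons y u : Fin (n+2) → Fin N) i.succ : ℕ))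
      = P (y : ℕ) (u 0 : ℕ) * ∏ i : Fin n, P (u i.castSucc : ℕ) (u i.succ : ℕ) := by
  rw [Fin.prod_univ_succ]
  congr 1

lemma cons_interior {N n : ℕ} (y : Fin N) (u : Fin (n+1) → Fin N) :
    (∀ j : Fin (n+1), ((Fin.cons y u : Fin (n+2) → Fin N) j.castSucc : ℕ) ≠ 0)
      ↔ ((y : ℕ) ≠ 0 ∧ ∀ k : Fin n, (u k.castSucc : ℕ) ≠ 0) := by
  constructor
  · intro h
    refine ⟨by simpa using h 0, fun k => ?_⟩
    have := h k.succ
    rwa [← Fin.succ_castSucc, Fin.cons_succ] at this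
  · rintro ⟨h0, h⟩ j
    rcases Fin.eq_zero_or_eq_succ j with rfl | ⟨k, rfl⟩
    · simpa using h0
    · rw [← Fin.succ_castSucc, Fin.cons_succ]; exact h k

lemma cons_last {N n : ℕ} (y : Fin N) (u : Fin (n+1) → Fin N) :
    (Fin.cons y u : Fin (n+2) → Fin N) (Fin.last (n+1)) = u (Fin.last n) := by
  rw [← Fin.succ_last, Fin.cons_succ]

lemma pathSum_succ (P : ℕ → ℕ → ℝ) (N t x : ℕ) :
    pathSum P N (t+1) x
      = ∑ y : Fin N, if (y : ℕ) = 0 then 0 else P x (y : ℕ) * pathSum P N t (y : ℕ) := by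
  rw [pathSum, sum_pi_succ]
  refine Finset.sum_congr rfl fun y _ => ?_
  rw [pathSum]
  by_cases hy : (y : ℕ) = 0
  · simp only [hy, if_true]
    refine Finset.sum_eq_zero fun u _ => ?_
    rw [cons_last]
    rw [if_neg]
    rintro ⟨-, h⟩
    exact ((cons_interior y u).mp h).1 hy
  · simp only [hy, if_false, Finset.mul_sum]
    refine Finset.sum_congr rfl fun u _ => ?_
    rw [cons_last, cons_prod]
    by_cases hc : ((u (Fin.last t) : ℕ) = 0 ∧ ∀ j : Fin t, (u j.castSucc : ℕ) ≠ 0)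
    · rw [if_pos ⟨hc.1, (cons_interior y u).mpr ⟨hy, hc.2⟩⟩, if_pos hc]
      rw [Fin.cons_zero]
    · rw [if_neg, if_neg hc, mul_zero]
      rintro ⟨h1, h2⟩
      exact hc ⟨h1, ((cons_interior y u).mp h2).2⟩

lemma pathSum_zero (P : ℕ → ℕ → ℝ) (N x : ℕ) (hN : 0 < N) :
    pathSum P N 0 x = P x 0 := by
  haveI : NeZero N := ⟨hN.ne'⟩
  rw [pathSum, sum_pi_succ]
  have h1 : ∀ y : Fin N, ∑ v : Fin 0 → Fin N,
      (if (((Fin.cons y v : Fin 1 → Fin N) (Fin.last 0) : ℕ) = 0 ∧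
          ∀ j : Fin 0, (((Fin.cons y v : Fin 1 → Fin N) j.castSucc : ℕ)) ≠ 0) then
        P x ((Fin.cons y v : Fin 1 → Fin N) 0) *
          ∏ i : Fin 0, P (((Fin.cons y v : Fin 1 → Fin N) i.castSucc : ℕ))
            (((Fin.cons y v : Fin 1 → Fin N) i.succ : ℕ))
      else 0) = if (y : ℕ) = 0 then P x (y : ℕ) else 0 := by
    intro y
    rw [Fintype.sum_eq_single (fun i => i.elim0)]
    · have : (Fin.last 0) = (0 : Fin 1) := rfl
      simp [this]
    · intro v hv; exact absurd (funext fun i => i.elim0) hv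
  rw [Finset.sum_congr rfl fun y _ => h1 y]
  rw [Finset.sum_eq_single (0 : Fin N)]
  · simp
  · intro y _ hy
    rw [if_neg]
    intro h; apply hy; ext; simp [h]
  · simp

lemma firstReturnProb_eq (P : ℕ → ℕ → ℝ) (t : ℕ) :
    firstReturnProb P (t+1) = pathSum P (t+2) t 0 := by
  rw [firstReturnProb, sum_pi_succ]
  rw [Finset.sum_eq_single (0 : Fin (t+2))]
  · rw [pathSum]
    refine Finset.sum_congr rfl fun u _ => ?_
    have hcond : (((Fin.cons 0 u : Fin (t+2) → Fin (t+2)) 0 : ℕ) = 0 ∧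
        ((Fin.cons 0 u : Fin (t+2) → Fin (t+2)) (Fin.last (t+1)) : ℕ) = 0 ∧
        (∀ i : Fin (t+2), i ≠ 0 → i ≠ Fin.last (t+1) →
          ((Fin.cons 0 u : Fin (t+2) → Fin (t+2)) i : ℕ) ≠ 0))
        ↔ (((u (Fin.last t)) : ℕ) = 0 ∧ ∀ j : Fin t, (u j.castSucc : ℕ) ≠ 0) := by
      rw [cons_last, Fin.cons_zero]
      constructor
      · rintro ⟨-, h1, h2⟩
        refine ⟨h1, fun j => ?_⟩
        have := h2 (j.castSucc).succ (Fin.succ_ne_zero _) ?_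
        · rwa [Fin.cons_succ] at this
        · rw [Fin.succ_castSucc]
          exact Fin.ne_of_lt (Fin.castSucc_lt_last _)
      · rintro ⟨h1, h2⟩
        refine ⟨rfl, h1, fun i hi0 hil => ?_⟩
        rcases Fin.eq_zero_or_eq_succ i with rfl | ⟨j, rfl⟩
        · exact absurd rfl hi0
        · rw [Fin.cons_succ]
          have hj : j ≠ Fin.last t := by
            rintro rfl; exact hil (by rw [Fin.succ_last])
          obtain ⟨k, rfl⟩ := Fin.exists_castSucc_eq.mpr hj
          exact h2 k
    by_cases hc : (((u (Fin.last t)) : ℕ) = 0 ∧ ∀ j : Fin t, (u j.castSucc : ℕ) ≠ 0)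
    · rw [if_pos (hcond.mpr hc), if_pos hc, pathProb, cons_prod]
      simp
    · rw [if_neg (fun h => hc (hcond.mp h)), if_neg hc]
  · intro y _ hy
    refine Finset.sum_eq_zero fun u _ => ?_
    rw [if_neg]
    rintro ⟨h0, -⟩
    rw [Fin.cons_zero] at h0
    exact hy (Fin.ext h0)
  · simp



noncomputable def hitp (a : ℕ → ℝ) : ℕ → ℕ → ℝ
  | 0, x => if x = 0 then 1 else 0
  | _+1, 0 => 0
  | t+1, x+1 => a (x+1) * hitp a t (x+2) + (1 - a (x+1)) * hitp a t x

noncomputable def stayp (a : ℕ → ℝ) : ℕ → ℕ → ℝ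
  | 0, x => if x = 0 then 0 else 1
  | _+1, 0 => 0
  | t+1, x+1 => a (x+1) * stayp a t (x+2) + (1 - a (x+1)) * stayp a t x

lemma bd_up (a : ℕ → ℝ) (m : ℕ) : bdTrans a (m+1) (m+2) = a (m+1) := by
  simp [bdTrans]

lemma bd_down (a : ℕ → ℝ) (m : ℕ) : bdTrans a (m+1) m = 1 - a (m+1) := by
  have h : ¬ (m = m + 1 + 1) := by omega
  simp [bdTrans, h]

lemma bd_zero (a : ℕ → ℝ) (m y : ℕ) (h1 : y ≠ m+2) (h2 : y ≠ m) : bdTrans a (m+1) y = 0 := by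
  have : m + 1 - 1 = m := by omega
  simp [bdTrans, this, h1, h2]

lemma pathSum_hitp (a : ℕ → ℝ) : ∀ (t m N : ℕ), m + t + 2 ≤ N →
    pathSum (bdTrans a) N t (m+1) = hitp a (t+1) (m+1) := by
  intro t
  induction t with
  | zero =>
    intro m N hN
    rw [pathSum_zero _ _ _ (by omega)]
    match m with
    | 0 => rw [bd_down a 0]; simp [hitp]
    | m+1 =>
      rw [bd_zero a (m+1) 0 (by omega) (by omega)]
      simp [hitp]
  | succ t IH =>
    intro m N hN
    rw [pathSum_succ]
    have key : ∀ y : Fin N,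
        (if (y:ℕ) = 0 then 0 else bdTrans a (m+1) (y:ℕ) * pathSum (bdTrans a) N t (y:ℕ))
        = (if (y:ℕ) = m+2 then a (m+1) * pathSum (bdTrans a) N t (m+2) else 0)
          + (if (y:ℕ) = m ∧ m ≠ 0 then (1 - a (m+1)) * pathSum (bdTrans a) N t m else 0) := by
      intro y
      by_cases h0 : (y:ℕ) = 0
      · rw [if_pos h0, if_neg (by omega), if_neg (by rintro ⟨h,hm⟩; omega)]
        norm_num
      · rw [if_neg h0]
        by_cases hup : (y:ℕ) = m + 2
        · rw [hup, bd_up, if_pos rfl, if_neg (by rintro ⟨h,hm⟩; omega)]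
          norm_num
        · rw [if_neg hup]
          by_cases hdn : (y:ℕ) = m
          · have hm : m ≠ 0 := fun h => h0 (by omega)
            rw [hdn, bd_down, if_pos ⟨rfl, hm⟩]
            norm_num
          · rw [bd_zero a m _ hup hdn, if_neg (fun h => hdn h.1)]
            norm_num
    rw [Finset.sum_congr rfl fun y _ => key y, Finset.sum_add_distrib]
    have e1 : ∑ y : Fin N, (if (y:ℕ) = m+2 then a (m+1) * pathSum (bdTrans a) N t (m+2) else 0)
        = a (m+1) * pathSum (bdTrans a) N t (m+2) := by
      rw [Fin.sum_univ_eq_sum_range (fun n => if n = m+2 then a (m+1) * pathSum (bdTrans a) N t (m+2) else 0)]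
      rw [Finset.sum_ite_eq' (Finset.range N) (m+2)]
      rw [if_pos (Finset.mem_range.mpr (by omega))]
    have e2 : ∑ y : Fin N, (if (y:ℕ) = m ∧ m ≠ 0 then (1 - a (m+1)) * pathSum (bdTrans a) N t m else 0)
        = if m = 0 then 0 else (1 - a (m+1)) * pathSum (bdTrans a) N t m := by
      by_cases hm : m = 0
      · subst hm
        simp
      · rw [Fin.sum_univ_eq_sum_range (fun n => if n = m ∧ m ≠ 0 then (1 - a (m+1)) * pathSum (bdTrans a) N t m else 0)]
        rw [if_neg hm]
        have : ∀ n, (if n = m ∧ m ≠ 0 then (1 - a (m+1)) * pathSum (bdTrans a) N t m else 0)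
            = (if n = m then (1 - a (m+1)) * pathSum (bdTrans a) N t m else 0) := by
          intro n
          by_cases h : n = m
          · rw [if_pos ⟨h, hm⟩, if_pos h]
          · rw [if_neg (fun hh => h hh.1), if_neg h]
        rw [Finset.sum_congr rfl fun n _ => this n]
        rw [Finset.sum_ite_eq' (Finset.range N) m]
        rw [if_pos (Finset.mem_range.mpr (by omega))]
    rw [e1, e2]
    rw [IH (m+1) N (by omega)]
    show _ = hitp a (t+2) (m+1)
    match m with
    | 0 =>
      rw [if_pos rfl]
      show _ = a 1 * hitp a (t+1) 2 + (1 - a 1) * hitp a (t+1) 0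
      show _ = a 1 * hitp a (t+1) 2 + (1 - a 1) * 0
      ring
    | m+1 =>
      rw [if_neg (by omega), IH m N (by omega)]
      rfl

lemma frp_hitp (a : ℕ → ℝ) (t : ℕ) :
    firstReturnProb (bdTrans a) (t+1) = hitp a t 1 := by
  rw [firstReturnProb_eq]
  match t with
  | 0 =>
    rw [pathSum_zero _ _ _ (by omega)]
    simp [bdTrans, hitp]
  | s+1 =>
    rw [pathSum_succ]
    have key : ∀ y : Fin (s+3),
        (if (y:ℕ) = 0 then 0 else bdTrans a 0 (y:ℕ) * pathSum (bdTrans a) (s+3) s (y:ℕ))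
        = (if (y:ℕ) = 1 then pathSum (bdTrans a) (s+3) s 1 else 0) := by
      intro y
      by_cases h0 : (y:ℕ) = 0
      · rw [if_pos h0, if_neg (by omega)]
      · rw [if_neg h0]
        by_cases h1 : (y:ℕ) = 1
        · rw [h1, if_pos rfl]
          simp [bdTrans]
        · rw [if_neg h1]
          have : bdTrans a 0 (y:ℕ) = 0 := by simp [bdTrans, h1]
          rw [this, zero_mul]
    rw [Finset.sum_congr rfl fun y _ => key y]
    rw [Fin.sum_univ_eq_sum_range (fun n => if n = 1 then pathSum (bdTrans a) (s+3) s 1 else 0)]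
    rw [Finset.sum_ite_eq' (Finset.range (s+3)) 1]
    rw [if_pos (Finset.mem_range.mpr (by omega))]
    exact pathSum_hitp a s 0 (s+3) (by omega)

section Analysis

variable {a : ℕ → ℝ} (ha : ∀ n : ℕ, 1 ≤ n → 0 ≤ a n ∧ a n ≤ 1)
include ha

lemma hitp_nonneg : ∀ t x, 0 ≤ hitp a t x := by
  intro t
  induction t with
  | zero => intro x; rw [hitp]; split <;> norm_num
  | succ t IH =>
    intro x
    match x with
    | 0 => rw [hitp]
    | x+1 =>
      rw [hitp]
      have h := ha (x+1) (by omega)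
      have := IH (x+2); have := IH x
      nlinarith

lemma stayp_nonneg : ∀ t x, 0 ≤ stayp a t x := by
  intro t
  induction t with
  | zero => intro x; rw [stayp]; split <;> norm_num
  | succ t IH =>
    intro x
    match x with
    | 0 => rw [stayp]
    | x+1 =>
      rw [stayp]
      have h := ha (x+1) (by omega)
      have := IH (x+2); have := IH x
      nlinarith

lemma stayp_le_one : ∀ t x, stayp a t x ≤ 1 := by
  intro t
  induction t with
  | zero => intro x; rw [stayp]; split <;> norm_num
  | succ t IH =>
    intro x
    match x with
    | 0 => rw [stayp]; norm_num
    | x+1 =>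
      rw [stayp]
      have h := ha (x+1) (by omega)
      have := IH (x+2); have := IH x
      nlinarith

lemma stayp_succ_le : ∀ t x, stayp a (t+1) x ≤ stayp a t x := by
  intro t
  induction t with
  | zero =>
    intro x
    match x with
    | 0 => simp [stayp]
    | x+1 =>
      have h := ha (x+1) (by omega)
      have h1 := stayp_le_one ha 0 (x+2)
      have h2 := stayp_le_one ha 0 x
      have h3 : stayp a 0 (x+1) = 1 := by rw [stayp]; norm_num
      show a (x+1) * stayp a 0 (x+2) + (1 - a (x+1)) * stayp a 0 x ≤ stayp a 0 (x+1)
      rw [h3]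
      nlinarith
  | succ t IH =>
    intro x
    match x with
    | 0 =>
      have e1 : stayp a (t+1+1) 0 = 0 := by rw [stayp]
      have e2 : stayp a (t+1) 0 = 0 := by rw [stayp]
      rw [e1, e2]
    | x+1 =>
      have h := ha (x+1) (by omega)
      have h1 := IH (x+2)
      have h2 := IH x
      show a (x+1) * stayp a (t+1) (x+2) + (1 - a (x+1)) * stayp a (t+1) x
        ≤ a (x+1) * stayp a t (x+2) + (1 - a (x+1)) * stayp a t x
      nlinarith

lemma partition : ∀ t x, stayp a t x + ∑ s ∈ Finset.range (t+1), hitp a s x = 1 := by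
  intro t
  induction t with
  | zero =>
    intro x
    rw [Finset.sum_range_one]
    match x with
    | 0 => rw [stayp, hitp]; norm_num
    | x+1 => rw [stayp, hitp]; norm_num
  | succ t IH =>
    intro x
    rw [Finset.sum_range_succ']
    match x with
    | 0 =>
      have hz : ∀ i, hitp a (i+1) 0 = 0 := fun i => by rw [hitp]
      rw [stayp]
      simp only [hz, Finset.sum_const_zero]
      rw [hitp]; norm_num
    | x+1 =>
      have e1 : ∀ i, hitp a (i+1) (x+1)
          = a (x+1) * hitp a i (x+2) + (1 - a (x+1)) * hitp a i x := fun i => by rw [hitp]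
      have e0 : hitp a 0 (x+1) = 0 := by rw [hitp]; norm_num
      rw [e0, add_zero]
      simp only [e1]
      rw [Finset.sum_add_distrib, ← Finset.mul_sum, ← Finset.mul_sum]
      have g1 := IH (x+2)
      have g2 := IH x
      rw [stayp]
      show a (x+1) * stayp a t (x+2) + (1 - a (x+1)) * stayp a t x +
        (a (x+1) * ∑ i ∈ Finset.range (t+1), hitp a i (x+2) +
         (1 - a (x+1)) * ∑ i ∈ Finset.range (t+1), hitp a i x) = 1
      linear_combination (a (x+1)) * g1 + (1 - a (x+1)) * g2

end Analysis


open Filter Topology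

/-- A birth and death chain on `ℕ` with up-probabilities `α_n` (and `α_0 = 1`) is
recurrent if and only if `Σ_{n≥1} 1/L_n = ∞`, where `L_n = Π_{k=1}^n α_k/β_k`. -/
theorem stmt14 (a : ℕ → ℝ) (ha0 : a 0 = 1) (ha : ∀ n : ℕ, 1 ≤ n → 0 < a n ∧ a n < 1)
    (L : ℕ → ℝ) (hL : ∀ n : ℕ, L n = ∏ k ∈ Finset.Icc 1 n, a k / (1 - a k)) :
    IsRecurrent (bdTrans a) ↔ ¬ Summable (fun n : ℕ => 1 / L (n + 1)) := by
  have haux : ∀ n : ℕ, 1 ≤ n → 0 ≤ a n ∧ a n ≤ 1 := fun n hn =>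
    ⟨(ha n hn).1.le, (ha n hn).2.le⟩
  set q : ℕ → ℝ := fun x => ⨅ t : ℕ, stayp a t x with hqdef
  have hmono : ∀ x, Antitone (fun t => stayp a t x) := fun x =>
    antitone_nat_of_succ_le (fun t => stayp_succ_le haux t x)
  have hbdd : ∀ x, BddBelow (Set.range fun t => stayp a t x) := fun x =>
    ⟨0, by rintro y ⟨t, rfl⟩; exact stayp_nonneg haux t x⟩
  have htend : ∀ x, Tendsto (fun t => stayp a t x) atTop (nhds (q x)) := fun x =>
    tendsto_atTop_ciInf (hmono x) (hbdd x)
  have hstayp0 : ∀ t, stayp a t 0 = 0 := by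
    intro t; match t with
    | 0 => simp [stayp]
    | t+1 => rw [stayp]
  have hq0 : q 0 = 0 := by
    rw [hqdef]; simp only [hstayp0]; exact ciInf_const
  have hqnn : ∀ x, 0 ≤ q x := fun x => le_ciInf fun t => stayp_nonneg haux t x
  have hqle1 : ∀ x, q x ≤ 1 := fun x => (ciInf_le (hbdd x) 0).trans (stayp_le_one haux 0 x)
  have hharm : ∀ x, q (x+1) = a (x+1) * q (x+2) + (1 - a (x+1)) * q x := by
    intro x
    have l1 : Tendsto (fun t => stayp a (t+1) (x+1)) atTop (nhds (q (x+1))) :=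
      (htend (x+1)).comp (tendsto_add_atTop_nat 1)
    have l2 : Tendsto (fun t => a (x+1) * stayp a t (x+2) + (1 - a (x+1)) * stayp a t x)
        atTop (nhds (a (x+1) * q (x+2) + (1 - a (x+1)) * q x)) :=
      (((htend (x+2)).const_mul _).add ((htend x).const_mul _))
    have heq : (fun t => stayp a (t+1) (x+1))
        = fun t => a (x+1) * stayp a t (x+2) + (1 - a (x+1)) * stayp a t x := by
      funext t; rw [stayp]
    rw [heq] at l1
    exact tendsto_nhds_unique l1 l2
  -- facts about L
  have hL0 : L 0 = 1 := by rw [hL 0]; simp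
  have hLpos : ∀ n, 0 < L n := by
    intro n; rw [hL n]
    refine Finset.prod_pos fun k hk => ?_
    have hk1 : 1 ≤ k := (Finset.mem_Icc.mp hk).1
    exact div_pos (ha k hk1).1 (by linarith [(ha k hk1).2])
  have hLrec : ∀ m, L (m+1) = L m * (a (m+1) / (1 - a (m+1))) := by
    intro m
    rw [hL (m+1), hL m, Finset.prod_Icc_succ_top (by omega)]
  -- difference formula
  have hd : ∀ x, q (x+1) - q x = q 1 / L x := by
    intro x
    induction x with
    | zero => rw [hq0, hL0]; ring
    | succ x IH =>
      have hh := hharm x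
      have hax := ha (x+1) (by omega)
      have hbx : (0:ℝ) < 1 - a (x+1) := by linarith [hax.2]
      have hLx := hLpos x
      have key : a (x+1) * (q (x+2) - q (x+1)) = (1 - a (x+1)) * (q (x+1) - q x) := by
        linear_combination -hh
      rw [IH] at key
      rw [hLrec x]
      have hane : a (x+1) ≠ 0 := ne_of_gt hax.1
      have hbne : (1 - a (x+1)) ≠ 0 := ne_of_gt hbx
      have hLne : L x ≠ 0 := ne_of_gt hLx
      field_simp at key ⊢
      linear_combination key
  have hsumform : ∀ x, q (x+1) = q 1 * ∑ n ∈ Finset.range (x+1), 1 / L n := by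
    intro x
    have := Finset.sum_range_sub q (x+1)
    rw [hq0, sub_zero] at this
    rw [← this, Finset.mul_sum]
    refine Finset.sum_congr rfl fun n _ => ?_
    rw [hd n, div_eq_mul_one_div]
  -- the tsum
  have hfr : ∀ t : ℕ, firstReturnProb (bdTrans a) (t+1) = hitp a t 1 := frp_hitp a
  have hpartial : ∀ T, ∑ s ∈ Finset.range (T+1), hitp a s 1 = 1 - stayp a T 1 := by
    intro T; linarith [partition (a := a) haux T 1]
  have hsummable : Summable (fun t => hitp a t 1) := by
    refine summable_of_sum_range_le (c := 1) (fun t => hitp_nonneg haux t 1) (fun n => ?_)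
    match n with
    | 0 => simp
    | T+1 => rw [hpartial T]; linarith [stayp_nonneg haux T 1]
  have htsum : ∑' t : ℕ, hitp a t 1 = 1 - q 1 := by
    have t1 := hsummable.hasSum.tendsto_sum_nat
    have t2 : Tendsto (fun T => ∑ i ∈ Finset.range (T+1), hitp a i 1) atTop
        (nhds (∑' t : ℕ, hitp a t 1)) := t1.comp (tendsto_add_atTop_nat 1)
    have t3 : Tendsto (fun T => 1 - stayp a T 1) atTop (nhds (1 - q 1)) :=
      tendsto_const_nhds.sub (htend 1)
    have heq : (fun T => ∑ i ∈ Finset.range (T+1), hitp a i 1)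
        = fun T => 1 - stayp a T 1 := funext hpartial
    rw [heq] at t2
    exact tendsto_nhds_unique t2 t3
  have hrec_iff : IsRecurrent (bdTrans a) ↔ q 1 = 0 := by
    rw [IsRecurrent, tsum_congr hfr, htsum]
    constructor
    · intro h; linarith
    · intro h; rw [h]; ring
  rw [hrec_iff]
  constructor
  · -- q 1 = 0 → ¬ Summable
    intro hq1 hsumm
    have hsum0 : Summable (fun n : ℕ => 1 / L n) := (summable_nat_add_iff 1).mp hsumm
    set S : ℝ := ∑' n : ℕ, 1 / L n with hS
    have hterm : ∀ n : ℕ, 0 ≤ 1 / L n := fun n => one_div_nonneg.mpr (hLpos n).le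
    have hpart_le : ∀ x, ∑ n ∈ Finset.range x, 1 / L n ≤ S := fun x =>
      Summable.sum_le_tsum _ (fun n _ => hterm n) hsum0
    have hS1 : (1:ℝ) ≤ S := by
      have := hpart_le 1
      rwa [Finset.sum_range_one, hL0, div_one] at this
    have hSpos : (0:ℝ) < S := by linarith
    have hlow : ∀ t x, (∑ n ∈ Finset.range x, 1 / L n) / S ≤ stayp a t x := by
      intro t
      induction t with
      | zero =>
        intro x
        match x with
        | 0 => simp [stayp]
        | m+1 =>
          have h1 : stayp a 0 (m+1) = 1 := by rw [stayp]; norm_num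
          rw [h1, div_le_one hSpos]
          exact hpart_le (m+1)
      | succ t IH =>
        intro x
        match x with
        | 0 => simp [stayp]
        | m+1 =>
          have hax := ha (m+1) (by omega)
          have hbx : (0:ℝ) < 1 - a (m+1) := by linarith [hax.2]
          have hPh : a (m+1) * ∑ n ∈ Finset.range (m+2), 1 / L n
              + (1 - a (m+1)) * ∑ n ∈ Finset.range m, 1 / L n
              = ∑ n ∈ Finset.range (m+1), 1 / L n := by
            rw [Finset.sum_range_succ, Finset.sum_range_succ]
            have hLm := (hLpos m).ne'
            have hLm1 := (hLpos (m+1)).ne'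
            have e : L (m+1) * (1 - a (m+1)) = L m * a (m+1) := by
              rw [hLrec m]
              field_simp
            have this' : a (m+1) / L (m+1) = (1 - a (m+1)) / L m := by
              rw [div_eq_div_iff (hLpos (m+1)).ne' (hLpos m).ne']
              linear_combination -e
            linear_combination this'
          have i1 := IH (m+2)
          have i2 := IH m
          show (∑ n ∈ Finset.range (m+1), 1 / L n) / S
            ≤ a (m+1) * stayp a t (m+2) + (1 - a (m+1)) * stayp a t m
          rw [← hPh]
          rw [add_div]
          rw [mul_div_assoc, mul_div_assoc]
          have g1 : a (m+1) * ((∑ n ∈ Finset.range (m+2), 1 / L n) / S)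
              ≤ a (m+1) * stayp a t (m+2) := by
            exact mul_le_mul_of_nonneg_left i1 hax.1.le
          have g2 : (1 - a (m+1)) * ((∑ n ∈ Finset.range m, 1 / L n) / S)
              ≤ (1 - a (m+1)) * stayp a t m := mul_le_mul_of_nonneg_left i2 hbx.le
          linarith
    have hq1ge : 1 / S ≤ q 1 := by
      refine le_ciInf fun t => ?_
      have := hlow t 1
      rwa [Finset.sum_range_one, hL0, div_one] at this
    rw [hq1] at hq1ge
    have : (0:ℝ) < 1 / S := by positivity
    linarith
  · -- ¬ Summable → q 1 = 0
    intro hns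
    by_contra hq1ne
    have hq1pos : 0 < q 1 := lt_of_le_of_ne (hqnn 1) (Ne.symm hq1ne)
    have hbound : ∀ x, ∑ n ∈ Finset.range x, 1 / L n ≤ 1 / q 1 := by
      intro x
      match x with
      | 0 =>
        rw [Finset.sum_range_zero]
        have : (0:ℝ) < 1 / q 1 := div_pos one_pos hq1pos
        linarith
      | y+1 =>
        have := hsumform y
        have h1 : ∑ n ∈ Finset.range (y+1), 1 / L n = q (y+1) / q 1 := by
          rw [this]; field_simp
        rw [h1]
        exact (div_le_div_iff_of_pos_right hq1pos).mpr (hqle1 (y+1))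
    have hsum0 : Summable (fun n : ℕ => 1 / L n) :=
      summable_of_sum_range_le (fun n => one_div_nonneg.mpr (hLpos n).le) hbound
    exact hns ((summable_nat_add_iff 1).mpr hsum0)
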